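/- arXiv:math/0512323 — 2 statements merged into one kernel-verified Lean document; each statement's English description precedes it below -/
import Mathlib

section
/- Every finite dimensional subspace W of a PN space (V, ν, τ, τ*), where τ* is Archimedean and ν_p ≠ ε_∞ for every p ∈ V (so V is a strong TVS), is strongly complete: every strongly Cauchy sequence in W strongly converges to a point of W. In particular, every finite dimensional such PN space is complete. -/
open Filter Topology

noncomputable section

/-- A distance distribution function: nondecreasing, left-continuous,
vanishing on `(-∞,0]`, bounded by `1`. -/
def DDF (F : ℝ → ℝ) : Prop :=
  Monotone F ∧ (∀ x ≤ 0, F x = 0) ∧ (∀ x, F x ≤ 1) ∧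
    ∀ x, Tendsto F (nhdsWithin x (Set.Iio x)) (nhds (F x))

/-- The unit step at `0`. -/
def eps0 : ℝ → ℝ := fun x => if x ≤ 0 then 0 else 1

/-- The unit step at `c`. -/
def epsc (c : ℝ) : ℝ → ℝ := fun x => if x ≤ c then 0 else 1

/-- `ε∞`: identically 0 on `ℝ` (value 1 only at `+∞`). -/
def epsInf : ℝ → ℝ := fun _ => 0

/-- Membership in `D⁺`: the distribution function tends to `1` at `+∞`. -/
def InDPlus (F : ℝ → ℝ) : Prop := Tendsto F atTop (nhds 1)

/-- Weak convergence of distribution functions. -/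
def WeakConv (Fn : ℕ → ℝ → ℝ) (F : ℝ → ℝ) : Prop :=
  ∀ x, ContinuousAt F x → Tendsto (fun n => Fn n x) atTop (nhds (F x))

/-- A continuous triangle function on `Δ⁺`. -/
def IsTriangleFunction (τ : (ℝ → ℝ) → (ℝ → ℝ) → (ℝ → ℝ)) : Prop :=
  (∀ F G, DDF F → DDF G → DDF (τ F G)) ∧
  (∀ F G H, DDF F → DDF G → DDF H → τ (τ F G) H = τ F (τ G H)) ∧
  (∀ F G, DDF F → DDF G → τ F G = τ G F) ∧
  (∀ F G H, DDF F → DDF G → DDF H → F ≤ G → τ F H ≤ τ G H) ∧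
  (∀ F, DDF F → τ F eps0 = F) ∧
  (∀ (Fn : ℕ → ℝ → ℝ) F G, (∀ n, DDF (Fn n)) → DDF F → DDF G →
    WeakConv Fn F → WeakConv (fun n => τ (Fn n) G) (τ F G))

/-- A probabilistic normed space `(V, ν, τ, τ*)`. -/
structure IsPNSpace (V : Type) [AddCommGroup V] [Module ℝ V]
    (ν : V → ℝ → ℝ) (τ τs : (ℝ → ℝ) → (ℝ → ℝ) → (ℝ → ℝ)) : Prop where
  ddf : ∀ p, DDF (ν p)
  tri : IsTriangleFunction τ
  tris : IsTriangleFunction τs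
  tle : ∀ F G, DDF F → DDF G → τ F G ≤ τs F G
  n1 : ∀ p, ν p = eps0 ↔ p = 0
  n2 : ∀ p, ν (-p) = ν p
  n3 : ∀ p q, τ (ν p) (ν q) ≤ ν (p + q)
  n4 : ∀ (p : V) (l : ℝ), 0 ≤ l → l ≤ 1 →
    ν p ≤ τs (ν (l • p)) (ν ((1 - l) • p))

/-- Archimedean triangle function: no idempotents besides `ε₀` and `ε∞`. -/
def IsArchimedean (τ : (ℝ → ℝ) → (ℝ → ℝ) → (ℝ → ℝ)) : Prop :=
  ∀ F, DDF F → τ F F = F → F = eps0 ∨ F = epsInf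

/-- Strong convergence of a sequence in a PN space. -/
def StrongConv {V : Type} [AddCommGroup V] (ν : V → ℝ → ℝ)
    (q : ℕ → V) (p : V) : Prop :=
  ∀ l : ℝ, 0 < l → ∀ᶠ n in atTop, ν (q n - p) l > 1 - l

/-- Strongly Cauchy sequence in a PN space. -/
def StrongCauchy {V : Type} [AddCommGroup V] (ν : V → ℝ → ℝ) (q : ℕ → V) : Prop :=
  ∀ l : ℝ, 0 < l → ∃ N, ∀ m n, N ≤ m → N ≤ n → ν (q m - q n) l > 1 - l

/-- `A` is `D`-bounded: some `G ∈ D⁺` lies below all `ν p`, `p ∈ A`. -/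
def DBounded {V : Type} (ν : V → ℝ → ℝ) (A : Set V) : Prop :=
  ∃ G : ℝ → ℝ, DDF G ∧ InDPlus G ∧ ∀ p ∈ A, G ≤ ν p

/-- `A` is `D`-compact: every sequence in `A` has a subsequence strongly
convergent to a point of `A`. -/
def DCompact {V : Type} [AddCommGroup V] (ν : V → ℝ → ℝ) (A : Set V) : Prop :=
  ∀ q : ℕ → V, (∀ n, q n ∈ A) → ∃ φ : ℕ → ℕ, StrictMono φ ∧
    ∃ p ∈ A, StrongConv ν (q ∘ φ) p

/-- `A` is closed under strong convergence of sequences. -/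
def SeqClosed {V : Type} [AddCommGroup V] (ν : V → ℝ → ℝ) (A : Set V) : Prop :=
  ∀ (q : ℕ → V) (p : V), (∀ n, q n ∈ A) → StrongConv ν q p → p ∈ A

/-- The probabilistic radius `R_A(x) = l⁻ inf {ν p x : p ∈ A}`. -/
def probRadius {V : Type} (ν : V → ℝ → ℝ) (A : Set V) (x : ℝ) : ℝ :=
  ⨆ y : Set.Iio x, ⨅ p : A, ν (p : V) (y : ℝ)
section PNAux

open Set

variable {V : Type} [AddCommGroup V] [Module ℝ V]

/-- step function at `η` with height `1 - η` -/
def Hfun (η : ℝ) : ℝ → ℝ := fun x => if x ≤ η then 0 else 1 - η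

lemma ddf_nonneg {F : ℝ → ℝ} (hF : DDF F) (x : ℝ) : 0 ≤ F x := by
  rcases le_or_gt x 0 with hx | hx
  · rw [hF.2.1 x hx]
  · have h0 := hF.1 hx.le
    rwa [hF.2.1 0 le_rfl] at h0

lemma eps0_eq_Hfun : eps0 = Hfun 0 := by
  funext x; simp [eps0, Hfun]

lemma Hfun_mono {η : ℝ} (h1 : η ≤ 1) : Monotone (Hfun η) := by
  intro a b hab
  simp only [Hfun]
  split_ifs with ha hb hc
  · exact le_rfl
  · linarith
  · exact absurd (hab.trans hc) ha
  · exact le_rfl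

lemma ddf_Hfun {η : ℝ} (h0 : 0 ≤ η) (h1 : η ≤ 1) : DDF (Hfun η) := by
  refine ⟨Hfun_mono h1, ?_, ?_, ?_⟩
  · intro x hx
    simp [Hfun, hx.trans h0]
  · intro x
    simp only [Hfun]
    split_ifs <;> linarith
  · intro x
    rcases le_or_gt x η with hx | hx
    · have hev : ∀ᶠ y in nhdsWithin x (Set.Iio x), Hfun η y = Hfun η x := by
        filter_upwards [self_mem_nhdsWithin] with y (hy : y < x)
        simp [Hfun, (hy.le.trans hx), hx]
      exact Tendsto.congr' (by filter_upwards [hev] with y h using h.symm) tendsto_const_nhds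
    · have hev : ∀ᶠ y in nhdsWithin x (Set.Iio x), Hfun η y = Hfun η x := by
        filter_upwards [Ioo_mem_nhdsLT_of_mem (Set.mem_Ioc.2 ⟨hx, le_rfl⟩)] with y hy
        simp [Hfun, not_le.2 hy.1, not_le.2 hx]
      exact Tendsto.congr' (by filter_upwards [hev] with y h using h.symm) tendsto_const_nhds

lemma ddf_eps0 : DDF eps0 := by
  rw [eps0_eq_Hfun]; exact ddf_Hfun le_rfl zero_le_one

lemma ddf_le_eps0 {F : ℝ → ℝ} (hF : DDF F) : F ≤ eps0 := by
  intro x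
  rcases le_or_gt x 0 with hx | hx
  · rw [hF.2.1 x hx, eps0]; simp [hx]
  · calc F x ≤ 1 := hF.2.2.1 x
      _ = eps0 x := by simp [eps0, not_le.2 hx]

lemma Hfun_le {F : ℝ → ℝ} {η : ℝ} (hF : DDF F) (hη : 1 - η < F η) : Hfun η ≤ F := by
  intro x
  simp only [Hfun]
  split_ifs with hx
  · exact ddf_nonneg hF x
  · exact le_trans hη.le (hF.1 (not_le.1 hx).le)

lemma Hfun_le_Hfun {a b : ℝ} (ha : a ≤ 1) (hab : a ≤ b) : Hfun b ≤ Hfun a := by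
  intro x
  simp only [Hfun]
  split_ifs with hb hax hax'
  · exact le_rfl
  · linarith
  · exact absurd (hax'.trans hab) hb
  · linarith

end PNAux
section PNAux2

open Set

lemma eps0_not_contAt : ¬ ContinuousAt eps0 0 := by
  intro h
  have h0 : eps0 0 = 0 := by simp [eps0]
  have h1 : Tendsto eps0 (nhdsWithin (0:ℝ) (Set.Ioi 0)) (nhds 0) := by
    have := h.tendsto
    rw [h0] at this
    exact this.mono_left nhdsWithin_le_nhds
  have h2 : Tendsto eps0 (nhdsWithin (0:ℝ) (Set.Ioi 0)) (nhds 1) := by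
    refine Tendsto.congr' ?_ tendsto_const_nhds
    filter_upwards [self_mem_nhdsWithin] with y (hy : (0:ℝ) < y)
    simp [eps0, not_le.2 hy]
  exact one_ne_zero (tendsto_nhds_unique h2 h1)

lemma weakconv_Hfun {η : ℕ → ℝ} (hpos : ∀ n, 0 < η n) (h1 : ∀ n, η n ≤ 1)
    (hto : Tendsto η atTop (nhds 0)) : WeakConv (fun n => Hfun (η n)) eps0 := by
  intro x hx
  have hx0 : x ≠ 0 := by rintro rfl; exact eps0_not_contAt hx
  rcases lt_or_gt_of_ne hx0 with hneg | hposx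
  · have : ∀ n, Hfun (η n) x = eps0 x := by
      intro n
      simp [Hfun, eps0, (hneg.le.trans (hpos n).le), hneg.le]
    simpa [this] using tendsto_const_nhds
  · have hev : ∀ᶠ n in atTop, Hfun (η n) x = 1 - η n := by
      filter_upwards [hto.eventually (eventually_lt_nhds hposx)] with n hn
      simp [Hfun, not_le.2 hn]
    have : Tendsto (fun n => 1 - η n) atTop (nhds (eps0 x)) := by
      have := (tendsto_const_nhds (x := (1:ℝ)) (f := atTop)).sub hto
      simpa [eps0, not_le.2 hposx] using this
    exact Tendsto.congr' (by filter_upwards [hev] with n hn using hn.symm) this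

lemma tau_mono2 {τ : (ℝ → ℝ) → (ℝ → ℝ) → (ℝ → ℝ)} (ht : IsTriangleFunction τ)
    {F F' G G' : ℝ → ℝ} (hF : DDF F) (hF' : DDF F') (hG : DDF G) (hG' : DDF G')
    (h1 : F ≤ F') (h2 : G ≤ G') : τ F G ≤ τ F' G' := by
  calc τ F G ≤ τ F' G := ht.2.2.2.1 F F' G hF hF' hG h1
    _ = τ G F' := ht.2.2.1 F' G hF' hG
    _ ≤ τ G' F' := ht.2.2.2.1 G G' F' hG hG' hF' h2
    _ = τ F' G' := ht.2.2.1 G' F' hG' hF'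

lemma taus_le_left {τs : (ℝ → ℝ) → (ℝ → ℝ) → (ℝ → ℝ)} (ht : IsTriangleFunction τs)
    {F G : ℝ → ℝ} (hF : DDF F) (hG : DDF G) : τs F G ≤ F := by
  calc τs F G ≤ τs F eps0 := tau_mono2 ht hF hF hG ddf_eps0 le_rfl (ddf_le_eps0 hG)
    _ = F := ht.2.2.2.2.1 F hF

/-- Key continuity property of a triangle function near `ε₀`. -/
lemma tau_cont_zero {τ : (ℝ → ℝ) → (ℝ → ℝ) → (ℝ → ℝ)} (ht : IsTriangleFunction τ)
    {l : ℝ} (hl : 0 < l) :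
    ∃ η, 0 < η ∧ η < l ∧ η ≤ 1 ∧
      ∀ F G, DDF F → DDF G → 1 - η < F η → 1 - η < G η → 1 - l < τ F G l := by
  set δ : ℝ := min l 1 / 2 with hδdef
  have hδ0 : 0 < δ := by
    have := lt_min hl one_pos
    positivity
  have hδl : δ < l := lt_of_lt_of_le (half_lt_self (lt_min hl one_pos)) (min_le_left _ _)
  have hδ1 : δ ≤ 1 := by
    have : min l 1 ≤ 1 := min_le_right _ _
    linarith
  set η : ℕ → ℝ := fun n => δ / 2 ^ n with hηdef
  have hηpos : ∀ n, 0 < η n := fun n => by positivity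
  have hηle : ∀ n, η n ≤ δ := by
    intro n
    apply div_le_self hδ0.le
    exact one_le_pow₀ one_le_two
  have hη0 : η 0 = δ := by simp [hηdef]
  have hηto : Tendsto η atTop (nhds 0) := by
    have h2 : Tendsto (fun n : ℕ => δ * (1/2:ℝ) ^ n) atTop (nhds (δ * 0)) :=
      (tendsto_pow_atTop_nhds_zero_of_lt_one (by norm_num) (by norm_num)).const_mul δ
    have : (fun n : ℕ => δ * (1/2:ℝ) ^ n) = η := by
      funext n
      simp [hηdef, div_pow, div_eq_mul_inv, inv_pow]
    rwa [this, mul_zero] at h2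
  have hddfH : ∀ n, DDF (Hfun (η n)) := fun n => ddf_Hfun (hηpos n).le ((hηle n).trans hδ1)
  have hddfδ : DDF (Hfun δ) := ddf_Hfun hδ0.le hδ1
  have hwc : WeakConv (fun n => Hfun (η n)) eps0 :=
    weakconv_Hfun hηpos (fun n => (hηle n).trans hδ1) hηto
  have hwc2 : WeakConv (fun n => τ (Hfun (η n)) (Hfun δ)) (τ eps0 (Hfun δ)) :=
    ht.2.2.2.2.2 _ _ _ hddfH ddf_eps0 hddfδ hwc
  have he : τ eps0 (Hfun δ) = Hfun δ := by
    rw [ht.2.2.1 _ _ ddf_eps0 hddfδ, ht.2.2.2.2.1 _ hddfδ]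
  have hca : ContinuousAt (Hfun δ) l := by
    apply Filter.EventuallyEq.continuousAt (y := 1 - δ)
    filter_upwards [eventually_gt_nhds hδl] with y hy
    simp [Hfun, not_le.2 hy]
  have hto : Tendsto (fun n => τ (Hfun (η n)) (Hfun δ) l) atTop (nhds (Hfun δ l)) := by
    have := hwc2 l (by rwa [he])
    rwa [he] at this
  have hval : Hfun δ l = 1 - δ := by simp [Hfun, not_le.2 hδl]
  have hev : ∀ᶠ n in atTop, 1 - l < τ (Hfun (η n)) (Hfun δ) l := by
    apply hto.eventually
    rw [hval]
    exact eventually_gt_nhds (by linarith)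
  obtain ⟨n, hn⟩ := hev.exists
  refine ⟨η n, hηpos n, lt_of_le_of_lt (hηle n) hδl, (hηle n).trans hδ1, ?_⟩
  intro F G hF hG hFη hGη
  have hstep : τ (Hfun (η n)) (Hfun δ) ≤ τ F G := by
    apply tau_mono2 ht (hddfH n) hF hddfδ hG (Hfun_le hF hFη)
    exact le_trans (Hfun_le_Hfun ((hηle n).trans hδ1) (hηle n)) (Hfun_le hG hGη)
  exact lt_of_lt_of_le hn (hstep l)

end PNAux2
section PNAux3

open Set

variable {V : Type} [AddCommGroup V] [Module ℝ V]
variable {ν : V → ℝ → ℝ} {τ τs : (ℝ → ℝ) → (ℝ → ℝ) → (ℝ → ℝ)}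

lemma level_mono {F : ℝ → ℝ} (hF : Monotone F) {a b : ℝ} (hab : a ≤ b)
    (h : 1 - a < F a) : 1 - b < F b :=
  lt_of_lt_of_le (lt_of_le_of_lt (by linarith) h) (hF hab)

lemma nu_zero (h : IsPNSpace V ν τ τs) : ν 0 = eps0 := (h.n1 0).mpr rfl

lemma nu_sub_symm (h : IsPNSpace V ν τ τs) (a b : V) : ν (a - b) = ν (b - a) := by
  rw [← h.n2, neg_sub]

lemma nu_smul_ge (h : IsPNSpace V ν τ τs) (p : V) {t : ℝ} (ht : |t| ≤ 1) :
    ν p ≤ ν (t • p) := by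
  have habs : ν (t • p) = ν (|t| • p) := by
    rcases abs_choice t with h' | h'
    · rw [h']
    · rw [h', neg_smul, h.n2]
  rw [habs]
  calc ν p ≤ τs (ν (|t| • p)) (ν ((1 - |t|) • p)) := h.n4 p |t| (abs_nonneg t) ht
    _ ≤ ν (|t| • p) := taus_le_left h.tris (h.ddf _) (h.ddf _)

lemma nu_nsmul (h : IsPNSpace V ν τ τs) :
    ∀ n : ℕ, ∀ l : ℝ, 0 < l → ∃ μ, 0 < μ ∧
      ∀ p : V, 1 - μ < ν p μ → 1 - l < ν ((n : ℝ) • p) l := by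
  intro n
  induction n with
  | zero =>
    intro l hl
    refine ⟨l, hl, fun p _ => ?_⟩
    simp only [Nat.cast_zero, zero_smul, nu_zero h, eps0, not_le.2 hl, if_false]
    linarith
  | succ n IH =>
    intro l hl
    obtain ⟨η, hη0, _, _, hkey⟩ := tau_cont_zero h.tri hl
    obtain ⟨μ, hμ0, hμ⟩ := IH η hη0
    refine ⟨min μ η, lt_min hμ0 hη0, fun p hp => ?_⟩
    have hpμ : 1 - μ < ν p μ := level_mono (h.ddf p).1 (min_le_left _ _) hp
    have hpη : 1 - η < ν p η := level_mono (h.ddf p).1 (min_le_right _ _) hp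
    have h1 : 1 - η < ν ((n : ℝ) • p) η := hμ p hpμ
    have h2 : 1 - l < τ (ν ((n : ℝ) • p)) (ν p) l :=
      hkey _ _ (h.ddf _) (h.ddf _) h1 hpη
    have h3 : ((n + 1 : ℕ) : ℝ) • p = (n : ℝ) • p + p := by
      push_cast
      rw [add_smul, one_smul]
    rw [h3]
    exact lt_of_lt_of_le h2 (h.n3 _ _ l)

lemma nu_smul_zero (h : IsPNSpace V ν τ τs) (harch : IsArchimedean τs)
    (hne : ∀ p : V, ν p ≠ epsInf) (p : V) {l : ℝ} (hl : 0 < l) :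
    ∃ δ, 0 < δ ∧ ∀ t : ℝ, |t| ≤ δ → 1 - l < ν (t • p) l := by
  set F : ℕ → ℝ → ℝ := fun n => ν (((1:ℝ)/2) ^ n • p) with hFdef
  have hFddf : ∀ n, DDF (F n) := fun n => h.ddf _
  have hFbdd : ∀ n x, F n x ≤ 1 := fun n x => (hFddf n).2.2.1 x
  have hFsucc : ∀ n, ((1:ℝ)/2) ^ (n+1) • p = ((1:ℝ)/2) • (((1:ℝ)/2) ^ n • p) := by
    intro n
    rw [pow_succ', mul_smul]
  have hFmono : ∀ n, F n ≤ F (n + 1) := by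
    intro n
    simp only [hFdef]
    rw [hFsucc n]
    exact nu_smul_ge h _ (by rw [abs_of_pos]; norm_num; norm_num)
  have hFmono' : Monotone F := monotone_nat_of_le_succ hFmono
  set G : ℝ → ℝ := fun x => ⨆ n, F n x with hGdef
  have hrbdd : ∀ x, BddAbove (Set.range fun n => F n x) := by
    intro x
    exact ⟨1, by rintro _ ⟨n, rfl⟩; exact hFbdd n x⟩
  have hFleG : ∀ n x, F n x ≤ G x := fun n x => le_ciSup (hrbdd x) n
  have hG1 : ∀ x, G x ≤ 1 := fun x => ciSup_le fun n => hFbdd n x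
  have hGmono : Monotone G := fun a b hab =>
    ciSup_le fun n => le_trans ((hFddf n).1 hab) (hFleG n b)
  have hGzero : ∀ x ≤ 0, G x = 0 := by
    intro x hx
    have : ∀ n, F n x = 0 := fun n => (hFddf n).2.1 x hx
    simp only [hGdef, this, ciSup_const]
  have hGkey : ∀ x, G x = sSup (G '' Set.Iio x) := by
    intro x
    have himg : (G '' Set.Iio x).Nonempty := (Set.nonempty_Iio).image G
    have hbddG : BddAbove (G '' Set.Iio x) := by
      refine ⟨1, ?_⟩
      rintro _ ⟨y, _, rfl⟩
      exact hG1 y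
    apply le_antisymm
    · have hFx : ∀ n, F n x = sSup (F n '' Set.Iio x) :=
        fun n => tendsto_nhds_unique ((hFddf n).2.2.2 x)
          ((hFddf n).1.tendsto_nhdsLT x)
      refine ciSup_le fun n => ?_
      rw [hFx n]
      refine csSup_le ((Set.nonempty_Iio).image _) ?_
      rintro _ ⟨y, hy, rfl⟩
      exact le_trans (hFleG n y) (le_csSup hbddG ⟨y, hy, rfl⟩)
    · refine csSup_le himg ?_
      rintro _ ⟨y, hy, rfl⟩
      exact hGmono (le_of_lt hy)
  have hGddf : DDF G := by
    refine ⟨hGmono, hGzero, hG1, fun x => ?_⟩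
    have := hGmono.tendsto_nhdsLT x
    rwa [← hGkey x] at this
  have hGfix : τs G G = G := by
    apply le_antisymm (taus_le_left h.tris hGddf hGddf)
    intro x
    refine ciSup_le fun n => ?_
    have hn4 : F n ≤ τs (F (n+1)) (F (n+1)) := by
      have := h.n4 (((1:ℝ)/2) ^ n • p) (1/2) (by norm_num) (by norm_num)
      simp only [hFdef]
      rw [hFsucc n]
      convert this using 3
      norm_num
    have hmono2 : τs (F (n+1)) (F (n+1)) ≤ τs G G :=
      tau_mono2 h.tris (hFddf _) hGddf (hFddf _) hGddf
        (fun y => hFleG _ y) (fun y => hFleG _ y)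
    exact le_trans (hn4 x) (hmono2 x)
  rcases harch G hGddf hGfix with hG | hG
  · have : 1 - l < G l := by
      rw [hG]
      simp only [eps0, not_le.2 hl, if_false]
      linarith
    obtain ⟨n, hn⟩ := exists_lt_of_lt_ciSup this
    refine ⟨((1:ℝ)/2) ^ n, by positivity, fun t ht => ?_⟩
    have hrep : t • p = (t * 2 ^ n) • (((1:ℝ)/2) ^ n • p) := by
      rw [smul_smul, mul_assoc, ← mul_pow]
      norm_num
    have habs : |t * 2 ^ n| ≤ 1 := by
      rw [abs_mul, abs_of_pos (by positivity : (0:ℝ) < 2 ^ n)]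
      calc |t| * 2 ^ n ≤ ((1:ℝ)/2) ^ n * 2 ^ n := by
            apply mul_le_mul_of_nonneg_right ht (by positivity)
        _ = 1 := by rw [← mul_pow]; norm_num
    rw [hrep]
    exact lt_of_lt_of_le hn (nu_smul_ge h _ habs l)
  · exfalso
    apply hne p
    funext x
    have h1 : ν p x ≤ G x := hFleG 0 x |>.trans_eq' (by simp [hFdef])
    have h2 : G x = 0 := by rw [hG]; rfl
    have h3 : 0 ≤ ν p x := ddf_nonneg (h.ddf p) x
    simp only [epsInf]
    linarith [h1.trans_eq h2]

lemma nu_smul_const (h : IsPNSpace V ν τ τs) (c : ℝ) {l : ℝ} (hl : 0 < l) :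
    ∃ μ, 0 < μ ∧ ∀ q : V, 1 - μ < ν q μ → 1 - l < ν (c • q) l := by
  set n : ℕ := ⌈|c|⌉₊ + 1 with hn
  obtain ⟨μ, hμ0, hμ⟩ := nu_nsmul h n l hl
  refine ⟨μ, hμ0, fun q hq => ?_⟩
  have hn0 : (0:ℝ) < (n:ℝ) := by positivity
  have hrep : c • q = (n : ℝ) • ((c / n) • q) := by
    rw [smul_smul, mul_div_cancel₀]
    exact ne_of_gt hn0
  have habs : |c / (n:ℝ)| ≤ 1 := by
    rw [abs_div, abs_of_pos hn0, div_le_one hn0]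
    calc |c| ≤ ⌈|c|⌉₊ := Nat.le_ceil _
      _ ≤ (n:ℝ) := by rw [hn]; push_cast; linarith
  have hq' : 1 - μ < ν ((c / n) • q) μ := lt_of_lt_of_le hq (nu_smul_ge h q habs μ)
  rw [hrep]
  exact hμ _ hq'

end PNAux3
section PNBasis

open Set

variable {V : Type} [AddCommGroup V] [Module ℝ V]

/-- The strong neighborhood filter basis at the origin of a PN space. -/
def pnAGB (ν : V → ℝ → ℝ) (τ τs : (ℝ → ℝ) → (ℝ → ℝ) → (ℝ → ℝ))
    (h : IsPNSpace V ν τ τs) : AddGroupFilterBasis V :=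
  addGroupFilterBasisOfComm
    {U | ∃ l : ℝ, 0 < l ∧ U = {q : V | 1 - l < ν q l}}
    ⟨_, ⟨1, one_pos, rfl⟩⟩
    (by
      rintro _ _ ⟨a, ha, rfl⟩ ⟨b, hb, rfl⟩
      refine ⟨{q : V | 1 - min a b < ν q (min a b)}, ⟨min a b, lt_min ha hb, rfl⟩, ?_⟩
      intro q hq
      exact ⟨level_mono (h.ddf q).1 (min_le_left _ _) hq,
        level_mono (h.ddf q).1 (min_le_right _ _) hq⟩)
    (by
      rintro _ ⟨l, hl, rfl⟩
      show 1 - l < ν 0 l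
      rw [nu_zero h]
      simp only [eps0, not_le.2 hl, if_false]
      linarith)
    (by
      rintro _ ⟨l, hl, rfl⟩
      obtain ⟨η, hη0, _, _, hkey⟩ := tau_cont_zero h.tri hl
      refine ⟨{q : V | 1 - η < ν q η}, ⟨η, hη0, rfl⟩, ?_⟩
      rintro _ ⟨p, hp, q, hq, rfl⟩
      exact lt_of_lt_of_le (hkey _ _ (h.ddf p) (h.ddf q) hp hq) (h.n3 p q l))
    (by
      rintro _ ⟨l, hl, rfl⟩
      refine ⟨{q : V | 1 - l < ν q l}, ⟨l, hl, rfl⟩, ?_⟩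
      intro q hq
      show 1 - l < ν (-q) l
      rwa [h.n2])

lemma mem_pnAGB {ν : V → ℝ → ℝ} {τ τs : (ℝ → ℝ) → (ℝ → ℝ) → (ℝ → ℝ)}
    {h : IsPNSpace V ν τ τs} {U : Set V} :
    U ∈ pnAGB ν τ τs h ↔ ∃ l : ℝ, 0 < l ∧ U = {q : V | 1 - l < ν q l} := Iff.rfl

/-- The strong topology module filter basis of a PN space. -/
def pnMFB (ν : V → ℝ → ℝ) (τ τs : (ℝ → ℝ) → (ℝ → ℝ) → (ℝ → ℝ))
    (h : IsPNSpace V ν τ τs) (harch : IsArchimedean τs)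
    (hne : ∀ p : V, ν p ≠ epsInf) : ModuleFilterBasis ℝ V where
  toAddGroupFilterBasis := pnAGB ν τ τs h
  smul' := by
    intro U hU
    obtain ⟨l, hl, rfl⟩ := mem_pnAGB.1 hU
    refine ⟨Set.Icc (-1 : ℝ) 1, Icc_mem_nhds (by norm_num) (by norm_num),
      {q : V | 1 - l < ν q l}, ⟨l, hl, rfl⟩, ?_⟩
    rintro _ ⟨t, ht, w, hw, rfl⟩
    exact lt_of_lt_of_le hw (nu_smul_ge h w (abs_le.2 ⟨ht.1, ht.2⟩) l)
  smul_left' := by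
    intro c U hU
    obtain ⟨l, hl, rfl⟩ := mem_pnAGB.1 hU
    obtain ⟨μ, hμ0, hμ⟩ := nu_smul_const h c hl
    exact ⟨{q : V | 1 - μ < ν q μ}, ⟨μ, hμ0, rfl⟩, fun q hq => hμ q hq⟩
  smul_right' := by
    intro p U hU
    obtain ⟨l, hl, rfl⟩ := mem_pnAGB.1 hU
    obtain ⟨δ, hδ0, hδ⟩ := nu_smul_zero h harch hne p hl
    have hball : Metric.ball (0:ℝ) δ ∈ nhds (0:ℝ) := Metric.ball_mem_nhds 0 hδ0
    filter_upwards [hball] with t ht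
    have habs : |t| < δ := by simpa [Real.dist_eq] using ht
    exact hδ t habs.le

end PNBasis
/-- Every finite dimensional subspace of a strong-TVS PN space is strongly
complete. -/
theorem statement8 {V : Type} [AddCommGroup V] [Module ℝ V]
    (ν : V → ℝ → ℝ) (τ τs : (ℝ → ℝ) → (ℝ → ℝ) → (ℝ → ℝ))
    (h : IsPNSpace V ν τ τs) (harch : IsArchimedean τs)
    (hne : ∀ p : V, ν p ≠ epsInf)
    (W : Submodule ℝ V) (hW : FiniteDimensional ℝ W)
    (q : ℕ → V) (hq : ∀ n, q n ∈ W) (hc : StrongCauchy ν q) :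
    ∃ p ∈ W, StrongConv ν q p := by
  classical
  let B : ModuleFilterBasis ℝ V := pnMFB ν τ τs h harch hne
  letI : TopologicalSpace V := B.topology
  haveI : IsTopologicalAddGroup V := B.toAddGroupFilterBasis.isTopologicalAddGroup
  haveI : ContinuousSMul ℝ V := B.continuousSMul
  have hb0 : Filter.HasBasis (nhds (0:V))
      (fun U : Set V => U ∈ B.toAddGroupFilterBasis) id :=
    B.toAddGroupFilterBasis.nhds_zero_hasBasis
  haveI : T2Space V := by
    apply IsTopologicalAddGroup.t2Space_of_zero_sep
    intro x hx
    have hν : ν x ≠ eps0 := fun hcon => hx ((h.n1 x).1 hcon)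
    have hex : ∃ l : ℝ, 0 < l ∧ ¬ (1 - l < ν x l) := by
      by_contra hcon
      push_neg at hcon
      apply hν
      funext y
      rcases le_or_gt y 0 with hy | hy
      · rw [(h.ddf x).2.1 y hy]
        simp [eps0, hy]
      · have h1 : ν x y = 1 := by
          have hle : ν x y ≤ 1 := (h.ddf x).2.2.1 y
          have hge : 1 ≤ ν x y := by
            refine le_of_forall_pos_le_add ?_
            intro ε hε
            have hl' : 0 < min ε y := lt_min hε hy
            have h4 := hcon (min ε y) hl'
            have h2 : ν x (min ε y) ≤ ν x y := (h.ddf x).1 (min_le_right _ _)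
            have h3 : min ε y ≤ ε := min_le_left _ _
            linarith
          linarith
        rw [h1]
        simp [eps0, not_le.2 hy]
    obtain ⟨l, hl, hnl⟩ := hex
    exact ⟨{q : V | 1 - l < ν q l}, hb0.mem_of_mem ⟨l, hl, rfl⟩, hnl⟩
  letI : UniformSpace V := IsTopologicalAddGroup.rightUniformSpace V
  haveI : IsUniformAddGroup V := isUniformAddGroup_of_addCommGroup
  have hWc : IsComplete (W : Set V) := W.complete_of_finiteDimensional
  have hUb : Filter.HasBasis (uniformity V)
      (fun U : Set V => U ∈ B.toAddGroupFilterBasis)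
      (fun U => {x : V × V | x.2 - x.1 ∈ U}) := by
    rw [uniformity_eq_comap_nhds_zero V]
    exact hb0.comap _
  have hcs : CauchySeq q := by
    rw [hUb.cauchySeq_iff]
    intro U hU
    obtain ⟨l, hl, rfl⟩ := (mem_pnAGB (ν := ν) (τ := τ) (τs := τs) (h := h)).1 hU
    obtain ⟨N, hN⟩ := hc l hl
    refine ⟨N, fun m hm n hn => ?_⟩
    show 1 - l < ν (q n - q m) l
    rw [nu_sub_symm h]
    exact hN m n hm hn
  obtain ⟨p, hpW, hp⟩ := hWc (Filter.map q Filter.atTop) hcs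
    (Filter.le_principal_iff.2 (Filter.mem_map.2 (Filter.Eventually.of_forall hq)))
  refine ⟨p, hpW, ?_⟩
  intro l hl
  have htend : Filter.Tendsto q Filter.atTop (nhds p) := hp
  have htend0 : Filter.Tendsto (fun n => q n - p) Filter.atTop (nhds 0) := by
    have := htend.sub_const p
    rwa [sub_self] at this
  have := (hb0.tendsto_right_iff).1 htend0 {q : V | 1 - l < ν q l} ⟨l, hl, rfl⟩
  filter_upwards [this] with n hn
  exact hn
end
end

section
/- Let (V, ν, τ, τ*) be a finite dimensional PN space where τ* is Archimedean, ν_p ≠ ε_∞ for all p, ν(V) ⊆ D⁺ and D⁺ is invariant under τ, over the real field equipped with a probabilistic norm ν' having the LG-property. Then a subset A of V is D-compact if and only if A is D-bounded and closed. -/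
open Filter Topology

noncomputable section

namespace PNAux

open Set

lemma ddf_nonneg {F : ℝ → ℝ} (hF : DDF F) (x : ℝ) : 0 ≤ F x := by
  rcases le_or_gt x 0 with hx | hx
  · rw [hF.2.1 x hx]
  · rw [← hF.2.1 0 le_rfl]; exact hF.1 hx.le

lemma ddf_le_eps0 {F : ℝ → ℝ} (hF : DDF F) : F ≤ eps0 := by
  intro x
  by_cases hx : x ≤ 0
  · simp [eps0, hx, hF.2.1 x hx]
  · simp only [eps0, if_neg hx]; exact hF.2.2.1 x

lemma sSup_Iio_eq {F : ℝ → ℝ} {x : ℝ} (hmono : Monotone F)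
    (hx : Tendsto F (nhdsWithin x (Set.Iio x)) (nhds (F x))) :
    sSup (F '' Iio x) = F x :=
  tendsto_nhds_unique (hmono.tendsto_nhdsLT x) hx

lemma ddf_sSup_Iio {F : ℝ → ℝ} (hF : DDF F) (x : ℝ) : sSup (F '' Iio x) = F x :=
  sSup_Iio_eq hF.1 (hF.2.2.2 x)

lemma ddf_of_sSup {F : ℝ → ℝ} (hmono : Monotone F) (h0 : ∀ x ≤ 0, F x = 0)
    (h1 : ∀ x, F x ≤ 1) (hs : ∀ x, sSup (F '' Iio x) = F x) : DDF F :=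
  ⟨hmono, h0, h1, fun x => by
    have := hmono.tendsto_nhdsLT x
    rwa [hs x] at this⟩

/-- step function of height `1 - δ` at `δ`. -/
def Kfun (δ : ℝ) : ℝ → ℝ := fun x => if x ≤ δ then 0 else 1 - δ

lemma eps0_eq_K : eps0 = Kfun 0 := by
  funext x; simp [eps0, Kfun]

lemma Kfun_mono {δ : ℝ} (h1 : δ ≤ 1) : Monotone (Kfun δ) := by
  intro a b hab
  simp only [Kfun]
  split_ifs with h h' <;> linarith

lemma csSup_image_Iio_of_witness {F : ℝ → ℝ} {x w : ℝ} (hm : Monotone F)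
    (h1 : ∀ y, F y ≤ 1) (hw : w < x) (hval : F w = F x) :
    sSup (F '' Iio x) = F x := by
  refine le_antisymm (csSup_le ⟨F w, ⟨w, hw, rfl⟩⟩ ?_) ?_
  · rintro _ ⟨y, hy, rfl⟩
    exact hm (le_of_lt hy)
  · rw [← hval]
    exact le_csSup ⟨1, by rintro _ ⟨y, _, rfl⟩; exact h1 y⟩ ⟨w, hw, rfl⟩

lemma ddf_K {δ : ℝ} (h0 : 0 ≤ δ) (h1 : δ ≤ 1) : DDF (Kfun δ) := by
  have hle1 : ∀ y, Kfun δ y ≤ 1 := by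
    intro y; simp only [Kfun]; split_ifs <;> linarith
  refine ddf_of_sSup (Kfun_mono h1) ?_ hle1 ?_
  · intro x hx; simp only [Kfun, if_pos (hx.trans h0)]
  · intro x
    rcases le_or_gt x δ with hx | hx
    · exact csSup_image_Iio_of_witness (Kfun_mono h1) hle1 (show x - 1 < x by linarith)
        (by simp only [Kfun, if_pos (by linarith : x - 1 ≤ δ), if_pos hx])
    · exact csSup_image_Iio_of_witness (Kfun_mono h1) hle1
        (show (δ + x) / 2 < x by linarith)
        (by simp only [Kfun, if_neg (by linarith : ¬(δ + x) / 2 ≤ δ),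
              if_neg (not_le.mpr hx)])

lemma ddf_eps0 : DDF eps0 := by
  rw [eps0_eq_K]; exact ddf_K le_rfl zero_le_one

lemma K_le_K {δ δ' : ℝ} (h0 : 0 ≤ δ) (hδ : δ ≤ δ') (h1 : δ ≤ 1) : Kfun δ' ≤ Kfun δ := by
  intro x
  simp only [Kfun]
  split_ifs with h h' <;> linarith

lemma ddf_ge_K {F : ℝ → ℝ} {δ : ℝ} (hF : DDF F) (hδ : 0 < δ) (h : F δ > 1 - δ) :
    Kfun δ ≤ F := by
  intro x
  by_cases hx : x ≤ δ
  · simp only [Kfun, if_pos hx]; exact ddf_nonneg hF x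
  · simp only [Kfun, if_neg hx]
    exact le_of_lt (lt_of_lt_of_le h (hF.1 (le_of_not_ge hx)))

lemma contK {δ x : ℝ} (hx : x ≠ δ) : ContinuousAt (Kfun δ) x := by
  rcases lt_or_gt_of_ne hx with h | h
  · have : Kfun δ =ᶠ[nhds x] fun _ => (0 : ℝ) := by
      filter_upwards [Iio_mem_nhds h] with y hy
      simp only [Kfun, if_pos (le_of_lt (Set.mem_Iio.mp hy))]
    exact this.continuousAt
  · have : Kfun δ =ᶠ[nhds x] fun _ => (1 - δ : ℝ) := by
      filter_upwards [Ioi_mem_nhds h] with y hy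
      simp only [Kfun, if_neg (not_le.mpr (Set.mem_Ioi.mp hy))]
    exact this.continuousAt

lemma inDPlus_eps0 : InDPlus eps0 := by
  refine Tendsto.congr' ?_ tendsto_const_nhds
  filter_upwards [eventually_gt_atTop (0 : ℝ)] with x hx
  simp [eps0, not_le.mpr hx]


lemma ddf_Km (m : ℕ) : DDF (Kfun (1 / ((m : ℝ) + 2))) :=
  ddf_K (by positivity) (by
    rw [div_le_one (by positivity)]
    have : (0:ℝ) ≤ (m:ℝ) := Nat.cast_nonneg m
    linarith)
lemma uncountable_Ioo {a b : ℝ} (hab : a < b) : ¬ (Set.Ioo a b).Countable := by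
  intro hc
  have h1 := hc.le_aleph0
  rw [Cardinal.mk_Ioo_real hab] at h1
  exact (Cardinal.aleph0_lt_continuum.not_ge) h1
lemma dense_contPts {f : ℝ → ℝ} (hf : Monotone f) (a b : ℝ) (hab : a < b) :
    ∃ s, ContinuousAt f s ∧ a < s ∧ s < b := by
  by_contra hcon
  push_neg at hcon
  have hsub : Set.Ioo a b ⊆ {x | ¬ContinuousAt f x} := by
    intro s hs hc
    rcases hcon s hc hs.1 with h
    exact absurd hs.2 (not_lt.mpr h)
  exact uncountable_Ioo hab (hf.countable_not_continuousAt.mono hsub)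
lemma mono_le_of_dense {φ ψ : ℝ → ℝ} (hφ : Monotone φ) (hψ : Monotone ψ)
    (hsup : ∀ x, sSup (φ '' Iio x) = φ x) (S : Set ℝ)
    (hS : ∀ a b : ℝ, a < b → ∃ s, s ∈ S ∧ a < s ∧ s < b)
    (h : ∀ x ∈ S, φ x ≤ ψ x) : φ ≤ ψ := by
  intro x
  rw [← hsup x]
  apply csSup_le ((nonempty_Iio (a := x)).image φ)
  rintro _ ⟨y, hy, rfl⟩
  obtain ⟨s, hsS, hys, hsx⟩ := hS y x hy
  exact ((hφ hys.le).trans (h s hsS)).trans (hψ hsx.le)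

lemma weakConv_K_eps0 : WeakConv (fun m : ℕ => Kfun (1 / ((m : ℝ) + 2))) eps0 := by
  intro y _
  rcases le_or_gt y 0 with hy | hy
  · have : ∀ m : ℕ, Kfun (1 / ((m : ℝ) + 2)) y = eps0 y := by
      intro m
      have hpos : (0:ℝ) < 1 / ((m : ℝ) + 2) := by positivity
      have h1 : Kfun (1 / ((m : ℝ) + 2)) y = 0 := if_pos (hy.trans hpos.le)
      have h2 : eps0 y = 0 := if_pos hy
      rw [h1, h2]
    simp only [this]
    exact tendsto_const_nhds
  · have h2 : Tendsto (fun m : ℕ => 1 / ((m : ℝ) + 2)) atTop (nhds 0) := by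
      have ha : Tendsto (fun m : ℕ => ((m : ℝ) + 2)) atTop atTop :=
        tendsto_atTop_add_const_right atTop 2 tendsto_natCast_atTop_atTop
      simpa only [one_div, Pi.inv_def] using ha.inv_tendsto_atTop
    have h3 : Tendsto (fun m : ℕ => 1 - 1 / ((m : ℝ) + 2)) atTop (nhds 1) := by
      have := h2.const_sub 1
      simpa using this
    have heq : ∀ᶠ m : ℕ in atTop, 1 - 1 / ((m : ℝ) + 2) = Kfun (1 / ((m : ℝ) + 2)) y := by
      have : ∀ᶠ m : ℕ in atTop, 1 / ((m : ℝ) + 2) < y := h2.eventually (gt_mem_nhds hy)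
      filter_upwards [this] with m hm
      exact (if_neg (not_le.mpr hm)).symm
    have h4 : eps0 y = 1 := if_neg (not_le.mpr hy)
    rw [h4]
    exact h3.congr' heq

section Tri
variable {τ : (ℝ → ℝ) → (ℝ → ℝ) → (ℝ → ℝ)} (ht : IsTriangleFunction τ)
include ht

lemma tau_comm {F G : ℝ → ℝ} (hF : DDF F) (hG : DDF G) : τ F G = τ G F :=
  ht.2.2.1 F G hF hG

lemma tau_mono1 {F F' G : ℝ → ℝ} (hF : DDF F) (hF' : DDF F') (hG : DDF G)
    (hle : F ≤ F') : τ F G ≤ τ F' G :=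
  ht.2.2.2.1 F F' G hF hF' hG hle

lemma tau_mono2 {F G G' : ℝ → ℝ} (hF : DDF F) (hG : DDF G) (hG' : DDF G')
    (hle : G ≤ G') : τ F G ≤ τ F G' := by
  rw [tau_comm ht hF hG, tau_comm ht hF hG']
  exact tau_mono1 ht hG hG' hF hle

lemma tau_eps0_right {F : ℝ → ℝ} (hF : DDF F) : τ F eps0 = F :=
  ht.2.2.2.2.1 F hF

lemma tau_eps0_left {F : ℝ → ℝ} (hF : DDF F) : τ eps0 F = F := by
  rw [tau_comm ht ddf_eps0 hF, tau_eps0_right ht hF]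

lemma tau_le_left {F G : ℝ → ℝ} (hF : DDF F) (hG : DDF G) : τ F G ≤ F := by
  calc τ F G ≤ τ F eps0 := tau_mono2 ht hF hG ddf_eps0 (ddf_le_eps0 hG)
    _ = F := tau_eps0_right ht hF

lemma tau_le_right {F G : ℝ → ℝ} (hF : DDF F) (hG : DDF G) : τ F G ≤ G := by
  rw [tau_comm ht hF hG]; exact tau_le_left ht hG hF


/-- Key limit: `τ (K_{1/(m+2)}) G → G` at continuity points of `G`. -/
lemma tendsto_tauK {G : ℝ → ℝ} (hG : DDF G) (x : ℝ) (hx : ContinuousAt G x) :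
    Tendsto (fun m : ℕ => τ (Kfun (1 / ((m : ℝ) + 2))) G x) atTop (nhds (G x)) := by
  have key := ht.2.2.2.2.2 (fun m : ℕ => Kfun (1 / ((m : ℝ) + 2))) eps0 G
    (fun m => ddf_Km m) ddf_eps0 hG weakConv_K_eps0
  rw [tau_eps0_left ht hG] at key
  exact key x hx

/-- `τ (Kfun δ) G ≤ F` for all small `δ` implies `G ≤ F`. -/
lemma le_of_tauK {F G : ℝ → ℝ} (hF : DDF F) (hG : DDF G)
    (hall : ∀ δ : ℝ, 0 < δ → δ ≤ 1 → τ (Kfun δ) G ≤ F) : G ≤ F := by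
  apply mono_le_of_dense hG.1 hF.1 (ddf_sSup_Iio hG) {x | ContinuousAt G x}
    (fun a b hab => by
      obtain ⟨s, h1, h2, h3⟩ := dense_contPts hG.1 a b hab
      exact ⟨s, h1, h2, h3⟩)
  intro x hx
  refine le_of_tendsto (tendsto_tauK ht hG x hx) (Eventually.of_forall fun m => ?_)
  have hm2 : (0:ℝ) < 1 / ((m : ℝ) + 2) := by positivity
  have hm1 : 1 / ((m : ℝ) + 2) ≤ 1 := by
    rw [div_le_one (by positivity)]
    have : (0:ℝ) ≤ (m:ℝ) := Nat.cast_nonneg m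
    linarith
  exact hall _ hm2 hm1 x

end Tri

/-- regularization of a monotone bounded function. -/
lemma ddf_reg {B : ℝ → ℝ} (hm : Monotone B) (h0 : ∀ x ≤ 0, B x = 0)
    (h1 : ∀ x, B x ≤ 1) :
    DDF (fun x => sSup (B '' Iio x)) ∧ (∀ x, sSup (B '' Iio x) ≤ B x) ∧
      (∀ x z : ℝ, x < z → B x ≤ sSup (B '' Iio z)) := by
  set B' : ℝ → ℝ := fun x => sSup (B '' Iio x) with hB'
  have hbdd : ∀ x : ℝ, BddAbove (B '' Iio x) := by
    intro x; exact ⟨1, by rintro _ ⟨y, _, rfl⟩; exact h1 y⟩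
  have hne : ∀ x : ℝ, (B '' Iio x).Nonempty := fun x => (nonempty_Iio (a := x)).image B
  have hB'le : ∀ x, B' x ≤ B x := fun x =>
    csSup_le (hne x) (by rintro _ ⟨y, hy, rfl⟩; exact hm (le_of_lt hy))
  have hleB' : ∀ x z : ℝ, x < z → B x ≤ B' z := fun x z hxz =>
    le_csSup (hbdd z) ⟨x, hxz, rfl⟩
  have hmono : Monotone B' := by
    intro a b hab
    apply csSup_le (hne a)
    rintro _ ⟨y, hy, rfl⟩
    exact hleB' y b (lt_of_lt_of_le hy hab)
  have h1' : ∀ x, B' x ≤ 1 := fun x => csSup_le (hne x) (by rintro _ ⟨y, _, rfl⟩; exact h1 y)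
  have h0' : ∀ x ≤ 0, B' x = 0 := by
    intro x hx
    refine le_antisymm (csSup_le (hne x) ?_) ?_
    · rintro _ ⟨y, hy, rfl⟩
      rw [h0 y (le_of_lt (lt_of_lt_of_le hy hx))]
    · have := hleB' (x - 1) x (by linarith)
      rwa [h0 (x - 1) (by linarith)] at this
  refine ⟨ddf_of_sSup hmono h0' h1' ?_, hB'le, hleB'⟩
  intro x
  refine le_antisymm (csSup_le ((nonempty_Iio (a := x)).image B') ?_) ?_
  · rintro _ ⟨y, hy, rfl⟩
    exact hmono (le_of_lt hy)
  · apply csSup_le (hne x)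
    rintro _ ⟨y, hy, rfl⟩
    have hyx : y < x := Set.mem_Iio.mp hy
    calc B y ≤ B' ((y + x) / 2) := hleB' _ _ (by linarith)
      _ ≤ sSup (B' '' Iio x) := le_csSup
          ⟨1, by rintro _ ⟨z, _, rfl⟩; exact h1' z⟩
          ⟨(y + x) / 2, Set.mem_Iio.mpr (by linarith), rfl⟩

end PNAux

namespace PNAux

open Set

/-- strongly-null sequences of d.d.f.s -/
def SN (Fn : ℕ → ℝ → ℝ) : Prop := ∀ l : ℝ, 0 < l → ∀ᶠ n in atTop, Fn n l > 1 - l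

lemma SN.tau {τ : (ℝ → ℝ) → (ℝ → ℝ) → (ℝ → ℝ)} (ht : IsTriangleFunction τ)
    {Fn Gn : ℕ → ℝ → ℝ} (hF : ∀ n, DDF (Fn n)) (hG : ∀ n, DDF (Gn n))
    (sF : SN Fn) (sG : SN Gn) : SN (fun n => τ (Fn n) (Gn n)) := by
  intro l hl
  rcases le_or_gt l 1 with hl1 | hl1
  · have hδ0pos : 0 < l / 2 := by linarith
    have hδ01 : l / 2 ≤ 1 := by linarith
    have hcont : ContinuousAt (Kfun (l / 2)) l := contK (by linarith : l ≠ l / 2)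
    have htt := tendsto_tauK ht (ddf_K hδ0pos.le hδ01) l hcont
    have hval : Kfun (l / 2) l = 1 - l / 2 := if_neg (by linarith : ¬ l ≤ l / 2)
    have hev : ∀ᶠ m : ℕ in atTop, 1 - l < τ (Kfun (1 / ((m:ℝ) + 2))) (Kfun (l / 2)) l := by
      apply htt.eventually (lt_mem_nhds _)
      rw [hval]; linarith
    obtain ⟨m, hm⟩ := hev.exists
    set δ := min (1 / ((m:ℝ) + 2)) (l / 2) with hδ
    have hδpos : 0 < δ := lt_min (by positivity) hδ0pos
    have hδ1 : δ ≤ 1 := le_trans (min_le_right _ _) hδ01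
    have hKδ : DDF (Kfun δ) := ddf_K hδpos.le hδ1
    have hKm : DDF (Kfun (1 / ((m:ℝ) + 2))) := ddf_Km m
    have hKδ0 : DDF (Kfun (l / 2)) := ddf_K hδ0pos.le hδ01
    filter_upwards [sF δ hδpos, sG δ hδpos] with n hFn hGn
    have h1 : Kfun δ ≤ Fn n := ddf_ge_K (hF n) hδpos hFn
    have h2 : Kfun δ ≤ Gn n := ddf_ge_K (hG n) hδpos hGn
    calc 1 - l < τ (Kfun (1 / ((m:ℝ) + 2))) (Kfun (l / 2)) l := hm
      _ ≤ τ (Kfun δ) (Kfun (l / 2)) l :=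
          tau_mono1 ht hKm hKδ hKδ0 (K_le_K hδpos.le (min_le_left _ _) hδ1) l
      _ ≤ τ (Kfun δ) (Kfun δ) l :=
          tau_mono2 ht hKδ hKδ0 hKδ (K_le_K hδpos.le (min_le_right _ _) hδ1) l
      _ ≤ τ (Fn n) (Kfun δ) l := tau_mono1 ht hKδ (hF n) hKδ h1 l
      _ ≤ τ (Fn n) (Gn n) l := tau_mono2 ht (hF n) hKδ (hG n) h2 l
  · refine Eventually.of_forall fun n => lt_of_lt_of_le (show (1:ℝ) - l < 0 by linarith) ?_
    exact ddf_nonneg (ht.1 _ _ (hF n) (hG n)) l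

section PN

variable {V : Type} [AddCommGroup V] [Module ℝ V] {ν : V → ℝ → ℝ}
  {τ τs : (ℝ → ℝ) → (ℝ → ℝ) → (ℝ → ℝ)} (h : IsPNSpace V ν τ τs)
include h

lemma nu_smul_le_base (p : V) {l : ℝ} (h0 : 0 ≤ l) (h1 : l ≤ 1) :
    ν p ≤ ν (l • p) :=
  le_trans (h.n4 p l h0 h1) (tau_le_left h.tris (h.ddf _) (h.ddf _))

lemma nu_smul_le (p : V) {a b : ℝ} (hab : |a| ≤ |b|) : ν (b • p) ≤ ν (a • p) := by
  rcases eq_or_ne b 0 with rfl | hb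
  · have ha : a = 0 := by
      rw [abs_zero] at hab
      exact abs_eq_zero.mp (le_antisymm hab (abs_nonneg a))
    rw [ha]
  · have hbpos : 0 < |b| := abs_pos.mpr hb
    have hl : |a / b| ≤ 1 := by
      rw [abs_div, div_le_one hbpos]; exact hab
    have hsmul : (a / b) • (b • p) = a • p := by
      rw [smul_smul, div_mul_cancel₀ a hb]
    rcases le_or_gt 0 (a / b) with hpos | hneg
    · have := nu_smul_le_base h (b • p) hpos (by rwa [abs_of_nonneg hpos] at hl)
      rwa [hsmul] at this
    · have h0' : 0 ≤ -(a / b) := by linarith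
      have h1' : -(a / b) ≤ 1 := by
        rw [abs_of_neg hneg] at hl; exact hl
      have := nu_smul_le_base h (b • p) h0' h1'
      rwa [neg_smul, h.n2, hsmul] at this

lemma sn_smul (harch : IsArchimedean τs) (hne : ∀ p : V, ν p ≠ epsInf)
    (p : V) {t : ℕ → ℝ} (htt : Tendsto t atTop (nhds 0)) :
    SN (fun n => ν (t n • p)) := by
  set g : ℕ → ℝ → ℝ := fun k => ν (((1:ℝ)/2) ^ k • p) with hg
  have hgd : ∀ k, DDF (g k) := fun k => h.ddf _
  have hgmono : ∀ k k' : ℕ, k ≤ k' → g k ≤ g k' := by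
    intro k k' hkk'
    apply nu_smul_le h
    rw [abs_of_nonneg (by positivity : (0:ℝ) ≤ (1/2:ℝ)^k'),
      abs_of_nonneg (by positivity : (0:ℝ) ≤ (1/2:ℝ)^k)]
    exact pow_le_pow_of_le_one (by norm_num) (by norm_num) hkk'
  have hbdd : ∀ x : ℝ, BddAbove (range fun k => g k x) :=
    fun x => ⟨1, by rintro _ ⟨k, rfl⟩; exact (hgd k).2.2.1 x⟩
  set F : ℝ → ℝ := fun x => ⨆ k, g k x with hF
  have hgleF : ∀ k x, g k x ≤ F x := fun k x => le_ciSup (hbdd x) k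
  have hFmono : Monotone F := by
    intro x y hxy
    exact ciSup_le fun k => le_trans ((hgd k).1 hxy) (hgleF k y)
  have hF1 : ∀ x, F x ≤ 1 := fun x => ciSup_le fun k => (hgd k).2.2.1 x
  have hF0 : ∀ x ≤ 0, F x = 0 := by
    intro x hx
    refine le_antisymm (ciSup_le fun k => le_of_eq ((hgd k).2.1 x hx)) ?_
    rw [← (hgd 0).2.1 x hx]
    exact hgleF 0 x
  have hFddf : DDF F := by
    refine ddf_of_sSup hFmono hF0 hF1 ?_
    intro x
    refine le_antisymm (csSup_le ((nonempty_Iio (a := x)).image F) ?_) ?_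
    · rintro _ ⟨y, hy, rfl⟩
      exact hFmono (le_of_lt hy)
    · apply ciSup_le
      intro k
      rw [← ddf_sSup_Iio (hgd k) x]
      apply csSup_le ((nonempty_Iio (a := x)).image (g k))
      rintro _ ⟨y, hy, rfl⟩
      exact le_trans (hgleF k y)
        (le_csSup ⟨1, by rintro _ ⟨z, _, rfl⟩; exact hF1 z⟩ ⟨y, hy, rfl⟩)
  have hhalf : ∀ k : ℕ, ((1:ℝ)/2) • (((1:ℝ)/2) ^ k • p) = ((1:ℝ)/2) ^ (k+1) • p := by
    intro k
    rw [smul_smul, pow_succ, mul_comm]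
  have hsub : F ≤ τs F F := by
    intro x
    apply ciSup_le
    intro k
    have h4 := h.n4 (((1:ℝ)/2) ^ k • p) (1/2) (by norm_num) (by norm_num)
    rw [show (1 - (1:ℝ)/2) = (1:ℝ)/2 by norm_num, hhalf k] at h4
    calc g k x ≤ τs (g (k+1)) (g (k+1)) x := h4 x
      _ ≤ τs F (g (k+1)) x :=
          tau_mono1 h.tris (hgd (k+1)) hFddf (hgd (k+1)) (fun y => hgleF (k+1) y) x
      _ ≤ τs F F x := tau_mono2 h.tris hFddf (hgd (k+1)) hFddf (fun y => hgleF (k+1) y) x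
  have heq : τs F F = F :=
    le_antisymm (tau_le_left h.tris hFddf hFddf) hsub
  rcases harch F hFddf heq with hFe | hFi
  · -- F = eps0 : conclude
    intro l hl
    have hFl : F l = 1 := by rw [hFe]; exact if_neg (not_le.mpr hl)
    have h5 : (1:ℝ) - l < F l := by rw [hFl]; linarith
    obtain ⟨k, hk⟩ := exists_lt_of_lt_ciSup (show (1:ℝ) - l < ⨆ k, g k l from h5)
    have hev : ∀ᶠ n in atTop, |t n| < ((1:ℝ)/2) ^ k := by
      have hball := htt.eventually (Metric.ball_mem_nhds (0:ℝ) (by positivity : (0:ℝ) < (1/2:ℝ)^k))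
      filter_upwards [hball] with n hn
      simpa [Real.dist_eq] using hn
    filter_upwards [hev] with n hn
    calc 1 - l < g k l := hk
      _ ≤ ν (t n • p) l := by
          apply nu_smul_le h p _ l
          rw [abs_of_nonneg (by positivity : (0:ℝ) ≤ (1/2:ℝ)^k)]
          exact hn.le
  · -- F = epsInf : contradiction with hne
    exfalso
    apply hne p
    funext x
    have h1 : ν p x ≤ F x := by
      have h2 := hgleF 0 x
      simp only [hg, pow_zero, one_smul] at h2
      exact h2
    rw [hFi] at h1
    exact le_antisymm h1 (ddf_nonneg (h.ddf p) x)

lemma sn_sum (harch : IsArchimedean τs) (hne : ∀ p : V, ν p ≠ epsInf)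
    {ι : Type} [DecidableEq ι] (s : Finset ι) (e : ι → V) (t : ℕ → ι → ℝ)
    (htt : ∀ i, Tendsto (fun n => t n i) atTop (nhds 0)) :
    SN (fun n => ν (∑ i ∈ s, t n i • e i)) := by
  induction s using Finset.induction_on with
  | empty =>
    intro l hl
    refine Eventually.of_forall fun n => ?_
    simp only [Finset.sum_empty]
    rw [(h.n1 0).mpr rfl]
    have : eps0 l = 1 := if_neg (not_le.mpr hl)
    rw [this]; linarith
  | @insert a s ha ih =>
    have hs : SN (fun n => τ (ν (t n a • e a)) (ν (∑ i ∈ s, t n i • e i))) :=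
      SN.tau h.tri (fun n => h.ddf _) (fun n => h.ddf _)
        (sn_smul h harch hne (e a) (htt a)) ih
    intro l hl
    filter_upwards [hs l hl] with n hn
    calc 1 - l < τ (ν (t n a • e a)) (ν (∑ i ∈ s, t n i • e i)) l := hn
      _ ≤ ν (t n a • e a + ∑ i ∈ s, t n i • e i) l := h.n3 _ _ l
      _ = ν (∑ i ∈ insert a s, t n i • e i) l := by rw [Finset.sum_insert ha]

lemma H_zero (harch : IsArchimedean τs) {e : V} (he : e ≠ 0) (x : ℝ) :
    ⨅ k : ℕ, ν ((2:ℝ) ^ k • e) x = 0 := by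
  set hk : ℕ → ℝ → ℝ := fun k => ν ((2:ℝ) ^ k • e) with hhk
  have hkd : ∀ k, DDF (hk k) := fun k => h.ddf _
  have hanti : ∀ k k' : ℕ, k ≤ k' → hk k' ≤ hk k := by
    intro k k' hkk'
    apply nu_smul_le h
    rw [abs_of_nonneg (by positivity : (0:ℝ) ≤ (2:ℝ)^k),
      abs_of_nonneg (by positivity : (0:ℝ) ≤ (2:ℝ)^k')]
    exact pow_le_pow_right₀ (by norm_num) hkk'
  have hbdd : ∀ y : ℝ, BddBelow (range fun k => hk k y) :=
    fun y => ⟨0, by rintro _ ⟨k, rfl⟩; exact ddf_nonneg (hkd k) y⟩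
  set H : ℝ → ℝ := fun y => ⨅ k, hk k y with hH
  have hHle : ∀ k y, H y ≤ hk k y := fun k y => ciInf_le (hbdd y) k
  have hH0le : ∀ y, 0 ≤ H y := fun y => le_ciInf fun k => ddf_nonneg (hkd k) y
  have hHmono : Monotone H := by
    intro a b hab
    exact le_ciInf fun k => le_trans (hHle k a) ((hkd k).1 hab)
  have hH1 : ∀ y, H y ≤ 1 := fun y => le_trans (hHle 0 y) ((hkd 0).2.2.1 y)
  have hHz : ∀ y ≤ 0, H y = 0 := by
    intro y hy
    refine le_antisymm ?_ (hH0le y)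
    rw [← (hkd 0).2.1 y hy]
    exact hHle 0 y
  set H' : ℝ → ℝ := fun y => sSup (H '' Iio y) with hH'def
  have hreg := ddf_reg hHmono hHz hH1
  have hH'ddf : DDF H' := hreg.1
  have hH'le : ∀ y, H' y ≤ H y := hreg.2.1
  have hleH' : ∀ y z : ℝ, y < z → H y ≤ H' z := hreg.2.2
  have htd : ∀ y, Tendsto (fun k => hk k y) atTop (nhds (H y)) := by
    intro y
    exact tendsto_atTop_ciInf (fun k k' hkk' => hanti k k' hkk' y) (hbdd y)
  have hweak : WeakConv hk H' := by
    intro y hy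
    have h2 : H y ≤ H' y := by
      have ht' : Tendsto H' (nhdsWithin y (Ioi y)) (nhds (H' y)) :=
        (hy.continuousWithinAt).tendsto
      refine ge_of_tendsto ht' ?_
      filter_upwards [self_mem_nhdsWithin] with z hz
      exact hleH' y z (mem_Ioi.mp hz)
    have heqy : H' y = H y := le_antisymm (hH'le y) h2
    rw [heqy]
    exact htd y
  have hstep0 : ∀ j k : ℕ, j ≤ k → ∀ y, H y ≤ τs (hk k) (hk j) y := by
    intro j k hjk y
    have h4 := h.n4 ((2:ℝ) ^ (k+1) • e) (1/2) (by norm_num) (by norm_num)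
    have hhalf : ((1:ℝ)/2) • ((2:ℝ) ^ (k+1) • e) = (2:ℝ) ^ k • e := by
      rw [smul_smul]
      congr 1
      rw [pow_succ]
      ring
    rw [show (1 - (1:ℝ)/2) = (1:ℝ)/2 by norm_num, hhalf] at h4
    calc H y ≤ hk (k+1) y := hHle (k+1) y
      _ ≤ τs (hk k) (hk k) y := h4 y
      _ ≤ τs (hk k) (hk j) y :=
          tau_mono2 h.tris (hkd k) (hkd k) (hkd j) (hanti j k hjk) y
  have hstep1 : ∀ j : ℕ, H' ≤ τs (hk j) H' := by
    intro j
    have hwc := h.tris.2.2.2.2.2 hk H' (hk j) hkd hH'ddf (hkd j) hweak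
    have hψd : DDF (τs H' (hk j)) := h.tris.1 _ _ hH'ddf (hkd j)
    have key : H' ≤ τs H' (hk j) := by
      apply mono_le_of_dense hH'ddf.1 hψd.1 (ddf_sSup_Iio hH'ddf)
        {y | ContinuousAt (τs H' (hk j)) y}
        (fun a b hab => dense_contPts hψd.1 a b hab)
      intro y hy
      refine le_trans (hH'le y) (ge_of_tendsto (hwc y hy) ?_)
      filter_upwards [eventually_ge_atTop j] with k hk'
      exact hstep0 j k hk' y
    rwa [tau_comm h.tris hH'ddf (hkd j)] at key
  have hstep2 : H' ≤ τs H' H' := by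
    have hwc := h.tris.2.2.2.2.2 hk H' H' hkd hH'ddf hH'ddf hweak
    have hψd : DDF (τs H' H') := h.tris.1 _ _ hH'ddf hH'ddf
    apply mono_le_of_dense hH'ddf.1 hψd.1 (ddf_sSup_Iio hH'ddf)
      {y | ContinuousAt (τs H' H') y}
      (fun a b hab => dense_contPts hψd.1 a b hab)
    intro y hy
    refine ge_of_tendsto (hwc y hy) (Eventually.of_forall fun j => ?_)
    exact hstep1 j y
  have heq : τs H' H' = H' :=
    le_antisymm (tau_le_left h.tris hH'ddf hH'ddf) hstep2
  rcases harch H' hH'ddf heq with he0 | heI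
  · -- H' = eps0 forces e = 0
    exfalso
    apply he
    apply (h.n1 e).mp
    funext y
    rcases le_or_gt y 0 with hy | hy
    · rw [(h.ddf e).2.1 y hy]
      exact (if_pos hy).symm
    · have hy2 : (0:ℝ) < y / 2 := by linarith
      have hH'y2 : H' (y/2) = 1 := by
        rw [he0]; exact if_neg (not_le.mpr hy2)
      have h6 : (1:ℝ) ≤ H (y/2) := by
        rw [← hH'y2]
        exact hH'le (y/2)
      have h7 : (1:ℝ) ≤ ν e y := by
        have h8 : H (y/2) ≤ hk 0 (y/2) := hHle 0 (y/2)
        have h9 : hk 0 (y/2) = ν e (y/2) := by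
          simp only [hhk, pow_zero, one_smul]
        have h10 : ν e (y/2) ≤ ν e y := (h.ddf e).1 (by linarith)
        linarith
      have h11 : ν e y ≤ 1 := (h.ddf e).2.2.1 y
      rw [show eps0 y = 1 from if_neg (not_le.mpr hy)]
      linarith
  · -- H' = epsInf, so H vanishes
    refine le_antisymm ?_ (hH0le x)
    exact le_trans (hleH' x (x+1) (by linarith)) (le_of_eq (congrFun heI (x+1)))

lemma exists_pow_big (harch : IsArchimedean τs) {e : V} (he : e ≠ 0)
    (x c : ℝ) (hc : 0 < c) : ∃ k : ℕ, ν ((2:ℝ) ^ k • e) x < c := by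
  have h0 := H_zero h harch he x
  have : ⨅ k : ℕ, ν ((2:ℝ) ^ k • e) x < c := by rw [h0]; exact hc
  exact exists_lt_of_ciInf_lt this

lemma dcompact_seqClosed {A : Set V} (hcomp : DCompact ν A) : SeqClosed ν A := by
  intro q p hq hconv
  obtain ⟨φ, hφ, p', hp'A, hconv'⟩ := hcomp q hq
  suffices hpp : p = p' by rwa [hpp]
  have hsn1 : SN (fun n => ν (p - q (φ n))) := by
    intro l hl
    have hev := hφ.tendsto_atTop.eventually (hconv l hl)
    filter_upwards [hev] with n hn
    have : ν (p - q (φ n)) = ν (q (φ n) - p) := by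
      rw [← h.n2 (q (φ n) - p), neg_sub]
    rw [this]
    exact hn
  have hsn2 : SN (fun n => ν (q (φ n) - p')) := fun l hl => hconv' l hl
  have hsn := SN.tau h.tri (fun n => h.ddf _) (fun n => h.ddf _) hsn1 hsn2
  have key : ∀ l : ℝ, 0 < l → 1 - l < ν (p - p') l := by
    intro l hl
    obtain ⟨n, hn⟩ := (hsn l hl).exists
    calc 1 - l < τ (ν (p - q (φ n))) (ν (q (φ n) - p')) l := hn
      _ ≤ ν ((p - q (φ n)) + (q (φ n) - p')) l := h.n3 _ _ l
      _ = ν (p - p') l := by rw [sub_add_sub_cancel]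
  have hdd : ν (p - p') = eps0 := by
    funext y
    rcases le_or_gt y 0 with hy | hy
    · rw [(h.ddf _).2.1 y hy]
      exact (if_pos hy).symm
    · rw [show eps0 y = 1 from if_neg (not_le.mpr hy)]
      refine le_antisymm ((h.ddf _).2.2.1 y) ?_
      by_contra hcon
      push_neg at hcon
      set l := min ((1 - ν (p - p') y) / 2) y with hldef
      have hl0 : 0 < l := lt_min (by linarith) hy
      have h1 := key l hl0
      have h2 : ν (p - p') l ≤ ν (p - p') y := (h.ddf _).1 (min_le_right _ _)
      have h3 : l ≤ (1 - ν (p - p') y) / 2 := min_le_left _ _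
      linarith
  exact sub_eq_zero.mp ((h.n1 _).mp hdd)

lemma dcompact_dbounded {A : Set V} (hD : ∀ p : V, InDPlus (ν p))
    (hcomp : DCompact ν A) : DBounded ν A := by
  rcases A.eq_empty_or_nonempty with rfl | hA
  · exact ⟨eps0, ddf_eps0, inDPlus_eps0, fun p hp => absurd hp (Set.notMem_empty p)⟩
  haveI : Nonempty ↥A := hA.to_subtype
  set B0 : ℝ → ℝ := fun y => ⨅ p : A, ν (p : V) y with hB0
  have hbdd : ∀ y : ℝ, BddBelow (range fun p : A => ν (p : V) y) :=
    fun y => ⟨0, by rintro _ ⟨p, rfl⟩; exact ddf_nonneg (h.ddf _) y⟩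
  have hB0le : ∀ (p : A) (y : ℝ), B0 y ≤ ν (p : V) y := fun p y => ciInf_le (hbdd y) p
  have hB0mono : Monotone B0 := by
    intro a b hab
    exact le_ciInf fun p => le_trans (hB0le p a) ((h.ddf _).1 hab)
  have hB00 : ∀ y ≤ 0, B0 y = 0 := by
    intro y hy
    refine le_antisymm ?_ (le_ciInf fun p => ddf_nonneg (h.ddf _) y)
    obtain ⟨p0, hp0⟩ := hA
    rw [← (h.ddf p0).2.1 y hy]
    exact hB0le ⟨p0, hp0⟩ y
  have hB01 : ∀ y, B0 y ≤ 1 := by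
    intro y
    obtain ⟨p0, hp0⟩ := hA
    exact le_trans (hB0le ⟨p0, hp0⟩ y) ((h.ddf p0).2.2.1 y)
  set Gb : ℝ → ℝ := fun y => sSup (B0 '' Iio y) with hGb
  have hreg := ddf_reg hB0mono hB00 hB01
  have hGbddf : DDF Gb := hreg.1
  have hGble : ∀ y, Gb y ≤ B0 y := hreg.2.1
  have hleGb : ∀ y z : ℝ, y < z → B0 y ≤ Gb z := hreg.2.2
  have hGlenu : ∀ p ∈ A, Gb ≤ ν p := by
    intro p hp y
    rw [← ddf_sSup_Iio (h.ddf p) y]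
    apply csSup_le ((nonempty_Iio (a := y)).image B0)
    rintro _ ⟨z, hz, rfl⟩
    exact le_trans (hB0le ⟨p, hp⟩ z)
      (le_csSup ((h.ddf p).1.map_bddAbove bddAbove_Iio) ⟨z, hz, rfl⟩)
  by_cases hL : Tendsto Gb atTop (nhds 1)
  · exact ⟨Gb, hGbddf, hL, hGlenu⟩
  exfalso
  have hbddG : BddAbove (range Gb) := ⟨1, by rintro _ ⟨y, rfl⟩; exact hGbddf.2.2.1 y⟩
  have htendG := tendsto_atTop_ciSup hGbddf.1 hbddG
  set L : ℝ := ⨆ y, Gb y with hLdef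
  have hL1 : L ≤ 1 := ciSup_le fun y => hGbddf.2.2.1 y
  have hLlt : L < 1 := lt_of_le_of_ne hL1 (fun heq1 => hL (heq1 ▸ htendG))
  set c : ℝ := (1 + L) / 2 with hc
  have hcL : L < c := by rw [hc]; linarith
  have hc1 : c < 1 := by rw [hc]; linarith
  have hB0L : ∀ y : ℝ, B0 y ≤ L :=
    fun y => le_trans (hleGb y (y+1) (lt_add_one y)) (le_ciSup hbddG (y+1))
  have hsel : ∀ n : ℕ, ∃ p : A, ν (p : V) (n : ℝ) < c :=
    fun n => exists_lt_of_ciInf_lt (lt_of_le_of_lt (hB0L (n : ℝ)) hcL)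
  choose P hP using hsel
  obtain ⟨φ, hφ, p, hpA, hconv⟩ := hcomp (fun n => (P n : V)) (fun n => (P n).2)
  have h1 : ∀ᶠ y : ℝ in atTop, c < ν p y := (hD p).eventually (lt_mem_nhds hc1)
  obtain ⟨X, hX⟩ := eventually_atTop.mp h1
  obtain ⟨x0, hx0c, hx0X, _⟩ := dense_contPts (h.ddf p).1 X (X+1) (lt_add_one X)
  have hpx0 : c < ν p x0 := hX x0 hx0X.le
  have hub : ∀ δ : ℝ, 0 < δ → δ ≤ 1 → τ (Kfun δ) (ν p) x0 ≤ c := by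
    intro δ hδ hδ1
    have hev1 : ∀ᶠ n in atTop, Kfun δ ≤ ν ((P (φ n) : V) - p) := by
      filter_upwards [hconv δ hδ] with n hn
      exact ddf_ge_K (h.ddf _) hδ hn
    have hev2 : ∀ᶠ n in atTop, x0 ≤ (φ n : ℝ) := by
      filter_upwards [eventually_ge_atTop ⌈x0⌉₊] with n hn
      calc x0 ≤ (⌈x0⌉₊ : ℝ) := Nat.le_ceil x0
        _ ≤ (n : ℝ) := by exact_mod_cast hn
        _ ≤ (φ n : ℝ) := by exact_mod_cast hφ.le_apply
    obtain ⟨n, hn1, hn2⟩ := (hev1.and hev2).exists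
    calc τ (Kfun δ) (ν p) x0
        ≤ τ (ν ((P (φ n) : V) - p)) (ν p) x0 :=
          tau_mono1 h.tri (ddf_K hδ.le hδ1) (h.ddf _) (h.ddf p) hn1 x0
      _ ≤ ν ((P (φ n) : V) - p + p) x0 := h.n3 _ _ x0
      _ = ν (P (φ n) : V) x0 := by rw [sub_add_cancel]
      _ ≤ ν (P (φ n) : V) (φ n : ℝ) := (h.ddf _).1 hn2
      _ ≤ c := (hP (φ n)).le
  have hfin : ν p x0 ≤ c := by
    refine le_of_tendsto (tendsto_tauK h.tri (h.ddf p) x0 hx0c)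
      (Eventually.of_forall fun m => ?_)
    have hm2 : (0:ℝ) < 1 / ((m : ℝ) + 2) := by positivity
    have hm1 : 1 / ((m : ℝ) + 2) ≤ 1 := by
      rw [div_le_one (by positivity)]
      have : (0:ℝ) ≤ (m:ℝ) := Nat.cast_nonneg m
      linarith
    exact hub _ hm2 hm1
  exact absurd hpx0 (not_lt.mpr hfin)

lemma dcompact_of_bounded_closed [FiniteDimensional ℝ V]
    (harch : IsArchimedean τs) (hne : ∀ p : V, ν p ≠ epsInf)
    {A : Set V} (hb : DBounded ν A) (hcl : SeqClosed ν A) : DCompact ν A := by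
  obtain ⟨G, hGddf, hGD, hGle⟩ := hb
  intro q hq
  set d := Module.finrank ℝ V with hd
  set b := Module.finBasis ℝ V with hbasis
  set cc : ℕ → (Fin d → ℝ) := fun n => b.equivFun (q n) with hcc
  -- Step 1: the coordinates are bounded
  have hbound : ∃ R : ℝ, ∀ n, ‖cc n‖ ≤ R := by
    by_contra hub
    push_neg at hub
    have hfreq : ∀ m : ℕ, ∃ᶠ k in atTop, ((m:ℝ) + 1) < ‖cc k‖ := by
      intro m
      rw [frequently_atTop]
      intro N
      have hfin : ∃ R0 : ℝ, ∀ k < N, ‖cc k‖ ≤ R0 := by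
        induction N with
        | zero => exact ⟨0, fun k hk => absurd hk (Nat.not_lt_zero k)⟩
        | succ N ihN =>
          obtain ⟨R0, hR0⟩ := ihN
          refine ⟨max R0 ‖cc N‖, fun k hk => ?_⟩
          rcases Nat.lt_succ_iff_lt_or_eq.mp hk with hk' | rfl
          · exact le_trans (hR0 k hk') (le_max_left _ _)
          · exact le_max_right _ _
      obtain ⟨R0, hR0⟩ := hfin
      obtain ⟨k, hk⟩ := hub (max R0 ((m:ℝ) + 1))
      refine ⟨k, ?_, lt_of_le_of_lt (le_max_right _ _) hk⟩
      by_contra hkN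
      push_neg at hkN
      exact absurd (hR0 k hkN) (not_le.mpr (lt_of_le_of_lt (le_max_left _ _) hk))
    obtain ⟨ψ, hψ, hψbig⟩ := extraction_forall_of_frequently hfreq
    set r : ℕ → ℝ := fun m => ‖cc (ψ m)‖ with hr
    have hrbig : ∀ m : ℕ, ((m:ℝ) + 1) < r m := fun m => hψbig m
    have hrpos : ∀ m, 0 < r m := fun m =>
      lt_of_le_of_lt (by positivity) (hrbig m)
    set uu : ℕ → (Fin d → ℝ) := fun m => (r m)⁻¹ • cc (ψ m) with huu
    have huus : ∀ m, uu m ∈ Metric.sphere (0 : Fin d → ℝ) 1 := by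
      intro m
      rw [mem_sphere_zero_iff_norm]
      rw [norm_smul, norm_inv, Real.norm_eq_abs, abs_of_pos (hrpos m)]
      exact inv_mul_cancel₀ (ne_of_gt (hrpos m))
    obtain ⟨u', hu'mem, χ, hχ, hχconv⟩ :=
      (isCompact_sphere (0 : Fin d → ℝ) 1).tendsto_subseq huus
    have hu'norm : ‖u'‖ = 1 := mem_sphere_zero_iff_norm.mp hu'mem
    set u : V := b.equivFun.symm u' with hu
    have hu0 : u ≠ 0 := by
      intro h0
      have h1 : u' = 0 := by
        have h2 := congrArg b.equivFun h0
        rwa [hu, LinearEquiv.apply_symm_apply, map_zero] at h2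
      rw [h1, norm_zero] at hu'norm
      exact one_ne_zero hu'norm.symm
    set w : ℕ → V := fun m => (r (χ m))⁻¹ • q (ψ (χ m)) with hw
    have hwcoord : ∀ m, b.equivFun (w m) = uu (χ m) := by
      intro m
      simp only [hw, huu, map_smul, hcc]
    have hGν : ∀ ρ : ℝ, 0 < ρ → G ≤ ν (ρ • u) := by
      intro ρ hρ
      apply le_of_tauK h.tri (h.ddf _) hGddf
      intro δ hδ hδ1
      have hrχ : Tendsto (fun m => r (χ m)) atTop atTop := by
        apply tendsto_atTop_mono (fun m => ?_)
        · exact tendsto_atTop_add_const_right _ 1 tendsto_natCast_atTop_atTop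
        · have hmχ : (m : ℝ) ≤ (χ m : ℝ) := by exact_mod_cast hχ.le_apply
          have := hrbig (χ m)
          linarith
      have hev1 : ∀ᶠ m in atTop, G ≤ ν (ρ • w m) := by
        filter_upwards [hrχ.eventually_ge_atTop ρ] with m hm
        have hsm : ρ • w m = (ρ * (r (χ m))⁻¹) • q (ψ (χ m)) := by
          rw [hw, smul_smul]
        have habs : |ρ * (r (χ m))⁻¹| ≤ |(1:ℝ)| := by
          rw [abs_one, abs_mul, abs_of_pos hρ, abs_inv,
            abs_of_pos (hrpos (χ m)), ← div_eq_mul_inv]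
          exact (div_le_one (hrpos (χ m))).mpr hm
        calc G ≤ ν (q (ψ (χ m))) := hGle _ (hq _)
          _ ≤ ν ((ρ * (r (χ m))⁻¹) • q (ψ (χ m))) := by
              have hv := nu_smul_le h (q (ψ (χ m))) habs
              rwa [one_smul] at hv
          _ = ν (ρ • w m) := by rw [hsm]
      have hcoordconv : ∀ i : Fin d,
          Tendsto (fun m => ρ * (u' i - uu (χ m) i)) atTop (nhds 0) := by
        intro i
        have h1 : Tendsto (fun m => uu (χ m) i) atTop (nhds (u' i)) :=
          tendsto_pi_nhds.mp hχconv i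
        have h2 : Tendsto (fun m => u' i - uu (χ m) i) atTop (nhds 0) := by
          have h3 := h1.const_sub (u' i)
          simpa using h3
        have h4 := h2.const_mul ρ
        simpa using h4
      have hrepr : ∀ m, ρ • u - ρ • w m =
          ∑ i, (ρ * (u' i - uu (χ m) i)) • b i := by
        intro m
        have h1 : ρ • u - ρ • w m = b.equivFun.symm (ρ • u' - ρ • uu (χ m)) := by
          rw [map_sub, map_smul, map_smul, hu]
          congr 2
          rw [← hwcoord m, LinearEquiv.symm_apply_apply]
        rw [h1, Module.Basis.equivFun_symm_apply]
        refine Finset.sum_congr rfl fun i _ => ?_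
        congr 1
        simp [mul_sub]
      have hsn : SN (fun m => ν (ρ • u - ρ • w m)) := by
        have hs := sn_sum h harch hne Finset.univ (fun i => b i)
          (fun m i => ρ * (u' i - uu (χ m) i)) hcoordconv
        intro l hl
        filter_upwards [hs l hl] with m hm
        rwa [hrepr m]
      have hev2 : ∀ᶠ m in atTop, Kfun δ ≤ ν (ρ • u - ρ • w m) := by
        filter_upwards [hsn δ hδ] with m hm
        exact ddf_ge_K (h.ddf _) hδ hm
      obtain ⟨m, hm1, hm2⟩ := (hev1.and hev2).exists
      calc τ (Kfun δ) G ≤ τ (ν (ρ • u - ρ • w m)) G :=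
            tau_mono1 h.tri (ddf_K hδ.le hδ1) (h.ddf _) hGddf hm2
        _ ≤ τ (ν (ρ • u - ρ • w m)) (ν (ρ • w m)) :=
            tau_mono2 h.tri (h.ddf _) hGddf (h.ddf _) hm1
        _ ≤ ν (ρ • u - ρ • w m + ρ • w m) := h.n3 _ _
        _ = ν (ρ • u) := by rw [sub_add_cancel]
    obtain ⟨x1, hx1⟩ :=
      (hGD.eventually (lt_mem_nhds (show (1:ℝ)/2 < 1 by norm_num))).exists
    obtain ⟨k, hk⟩ := exists_pow_big h harch hu0 x1 (G x1) (by linarith)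
    exact absurd (hGν ((2:ℝ)^k) (by positivity) x1) (not_le.mpr hk)
  -- Step 2: extract a convergent subsequence
  obtain ⟨R, hR⟩ := hbound
  have hmem : ∀ n, cc n ∈ Metric.closedBall (0 : Fin d → ℝ) R := by
    intro n
    rw [Metric.mem_closedBall, dist_zero_right]
    exact hR n
  obtain ⟨cl, _, χ, hχ, hχconv⟩ :=
    (isCompact_closedBall (0 : Fin d → ℝ) R).tendsto_subseq hmem
  set p : V := b.equivFun.symm cl with hp
  have hrepr : ∀ m, q (χ m) - p = ∑ i, (cc (χ m) i - cl i) • b i := by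
    intro m
    have h1 : q (χ m) - p = b.equivFun.symm (cc (χ m) - cl) := by
      rw [map_sub, hp]
      congr 1
      rw [hcc]
      exact (b.equivFun.symm_apply_apply (q (χ m))).symm
    rw [h1, Module.Basis.equivFun_symm_apply]
    exact Finset.sum_congr rfl fun i _ => by rw [Pi.sub_apply]
  have hcoord : ∀ i : Fin d,
      Tendsto (fun m => cc (χ m) i - cl i) atTop (nhds 0) := by
    intro i
    have h1 : Tendsto (fun m => cc (χ m) i) atTop (nhds (cl i)) :=
      tendsto_pi_nhds.mp hχconv i
    have h2 := h1.sub_const (cl i)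
    simpa using h2
  have hsn := sn_sum h harch hne Finset.univ (fun i => b i)
    (fun m i => cc (χ m) i - cl i) hcoord
  have hconv : StrongConv ν (q ∘ χ) p := by
    intro l hl
    filter_upwards [hsn l hl] with m hm
    show 1 - l < ν (q (χ m) - p) l
    rwa [hrepr m]
  exact ⟨χ, hχ, p, hcl (q ∘ χ) p (fun m => hq (χ m)) hconv, hconv⟩

end PN

end PNAux

/-- In a finite dimensional strong-TVS PN space with `ν(V) ⊆ D⁺`,
`τ`-invariant `D⁺`, over `ℝ` with an LG-property probabilistic norm:
`A` is `D`-compact iff `A` is `D`-bounded and closed. -/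
theorem statement16 {V : Type} [AddCommGroup V] [Module ℝ V]
    [FiniteDimensional ℝ V]
    (ν : V → ℝ → ℝ) (τ τs : (ℝ → ℝ) → (ℝ → ℝ) → (ℝ → ℝ))
    (h : IsPNSpace V ν τ τs) (harch : IsArchimedean τs)
    (hne : ∀ p : V, ν p ≠ epsInf)
    (hD : ∀ p : V, InDPlus (ν p))
    (hInv : ∀ F G, DDF F → DDF G → InDPlus F → InDPlus G → InDPlus (τ F G))
    (ν' : ℝ → ℝ → ℝ) (τ' τ's : (ℝ → ℝ) → (ℝ → ℝ) → (ℝ → ℝ))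
    (h' : IsPNSpace ℝ ν' τ' τ's)
    (hLG : ∀ x : ℝ, 0 < x →
      Tendsto (fun r : ℝ => ν' r x) (comap (fun r : ℝ => |r|) atTop) (nhds 0))
    (A : Set V) :
    DCompact ν A ↔ DBounded ν A ∧ SeqClosed ν A := by
  constructor
  · intro hcomp
    exact ⟨PNAux.dcompact_dbounded h hD hcomp, PNAux.dcompact_seqClosed h hcomp⟩
  · rintro ⟨hb, hcl⟩
    exact PNAux.dcompact_of_bounded_closed h harch hne hb hcl
end
end
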